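/- With Q(s) = 2a·sqrt(1-s²) + (a²-1)·s, b = 1, and Θ(s) = (Q(s) - s·Q'(s))/(2·(1 + s·Q(s) + (1-s²)·Q'(s))), one has Θ(s) = 1/(a·sqrt(1-s²)), for nonzero real a and |s| < 1 on the set where the denominator is nonzero. -/

import Mathlib

open Real

theorem stmt_4 (a : ℝ) (ha : a ≠ 0) (Q : ℝ → ℝ)
    (hQ : ∀ s : ℝ, Q s = 2 * a * Real.sqrt (1 - s ^ 2) + (a ^ 2 - 1) * s)
    (s : ℝ) (hs : |s| < 1)
    (hden : 1 + s * Q s + (1 - s ^ 2) * deriv Q s ≠ 0) :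
    (Q s - s * deriv Q s) / (2 * (1 + s * Q s + (1 - s ^ 2) * deriv Q s)) =
      1 / (a * Real.sqrt (1 - s ^ 2)) := by
  have habs := abs_lt.mp hs
  have hpos : (0:ℝ) < 1 - s ^ 2 := by nlinarith [habs.1, habs.2]
  set r := Real.sqrt (1 - s ^ 2) with hrdef
  have hr : 0 < r := Real.sqrt_pos.mpr hpos
  have hr2 : r ^ 2 = 1 - s ^ 2 := Real.sq_sqrt hpos.le
  have hQfun : Q = fun t => 2 * a * Real.sqrt (1 - t ^ 2) + (a ^ 2 - 1) * t :=
    funext hQ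
  have hd1 : HasDerivAt (fun t : ℝ => 1 - t ^ 2) (-(2 * s)) s := by
    simpa using ((hasDerivAt_pow 2 s).const_sub 1)
  have hd2 : HasDerivAt (fun t : ℝ => Real.sqrt (1 - t ^ 2))
      (1 / (2 * r) * (-(2 * s))) s :=
    (Real.hasDerivAt_sqrt hpos.ne').comp s hd1
  have hd : HasDerivAt Q
      (2 * a * (1 / (2 * r) * (-(2 * s))) + (a ^ 2 - 1)) s := by
    rw [hQfun]
    simpa [Pi.add_def] using (hd2.const_mul (2 * a)).add ((hasDerivAt_id s).const_mul (a ^ 2 - 1))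
  have hD : deriv Q s = 2 * a * (1 / (2 * r) * (-(2 * s))) + (a ^ 2 - 1) :=
    hd.deriv
  have hden2 : 1 + s * Q s + (1 - s ^ 2) * deriv Q s = a ^ 2 := by
    rw [hQ s, hD, ← hrdef, ← hr2]
    field_simp
    linear_combination (a ^ 2 - 1) * hr2
  rw [hden2, hQ s, hD, ← hrdef]
  field_simp
  linear_combination (2 * a) * hr2
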